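/- Let b_1, b_2, b_3, … be nonnegative real numbers and let x ≥ 0 be such that Σ_{k=1}^∞ b_k x^k < ∞. Then exp(Σ_{k=1}^∞ b_k x^k) = Σ_{p=0}^∞ x^p Σ_{k ∈ C(p)} (1/(dim k)!) Π_{l=1}^{dim k} b_{k_l}, where for p = 0 the inner sum equals 1 (the contribution of the empty composition), and in particular the right-hand side converges. -/

import Mathlib

open scoped Nat ENNReal

private lemma comp_sigma_ext {p q : ℕ} {c : Composition p} {d : Composition q}
    (h : c.blocks = d.blocks) : (⟨p, c⟩ : Σ n, Composition n) = ⟨q, d⟩ := by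
  obtain rfl : p = q := by rw [← c.blocks_sum, ← d.blocks_sum, h]
  exact congrArg _ (Composition.ext h)

/-- The equivalence between compositions (of all naturals) and finite tuples of naturals,
sending a composition to the tuple of its blocks, each decreased by one. -/
private def compTupleEquiv : (Σ p, Composition p) ≃ (Σ n, Fin n → ℕ) where
  toFun c := ⟨c.2.length, fun i => c.2.blocksFun i - 1⟩
  invFun f := ⟨∑ i, (f.2 i + 1),
    ⟨List.ofFn fun i => f.2 i + 1,
      fun hi => by
        rw [List.mem_ofFn] at hi
        obtain ⟨j, rfl⟩ := hi
        exact Nat.succ_pos _,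
      by rw [List.sum_ofFn]⟩⟩
  left_inv := fun ⟨p, c⟩ => by
    apply comp_sigma_ext
    show List.ofFn (fun i => c.blocksFun i - 1 + 1) = c.blocks
    rw [← c.ofFn_blocksFun]
    congr 1
    funext i
    exact Nat.sub_add_cancel (c.one_le_blocksFun i)
  right_inv := fun ⟨n, f⟩ => by
    refine Fin.sigma_eq_of_eq_comp_cast (by simp [Composition.length]) ?_
    funext i
    show (⟨List.ofFn fun j => f j + 1, _, _⟩ : Composition _).blocksFun i - 1 = _
    simp only [Composition.blocksFun, Composition.blocks, List.get_ofFn, Function.comp,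
      Nat.add_sub_cancel]

private lemma ofReal_inv_factorial (n : ℕ) :
    ENNReal.ofReal ((n ! : ℝ)⁻¹) = ((n ! : ℝ≥0∞))⁻¹ := by
  rw [ENNReal.ofReal_inv_of_pos (by positivity), ENNReal.ofReal_natCast]

private lemma tsum_pi_fin_pow (C : ℕ → ℝ≥0∞) (n : ℕ) :
    ∑' f : Fin n → ℕ, ∏ i, C (f i) = (∑' k, C k) ^ n := by
  induction n with
  | zero =>
    rw [pow_zero, tsum_eq_single (fun _ => 0)]
    · simp
    · intro f hf; exact absurd (Subsingleton.elim f _) hf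
  | succ n ih =>
    rw [← (Fin.consEquiv fun _ : Fin (n + 1) => ℕ).tsum_eq fun f => ∏ i, C (f i)]
    have h : ∀ p : ℕ × (Fin n → ℕ),
        (∏ i, C ((Fin.consEquiv fun _ : Fin (n + 1) => ℕ) p i)) = C p.1 * ∏ i, C (p.2 i) := by
      intro p
      rw [Fin.prod_univ_succ]
      simp [Fin.consEquiv]
    simp_rw [h]
    rw [ENNReal.tsum_prod']
    simp_rw [ENNReal.tsum_mul_left]
    rw [ih, ENNReal.tsum_mul_right, pow_succ, mul_comm]

/-- **Regrouping-by-powers identity.** If `b₁, b₂, …` are nonnegative reals, `x ≥ 0`, and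
`Σ_{k≥1} b_k x^k` converges, then
`exp(Σ_{k≥1} b_k x^k) = Σ_p x^p Σ_{k ∈ C(p)} (1/(dim k)!) Π_l b_{k_l}`,
where the inner sum at `p = 0` equals `1` (the empty composition); in particular the
right-hand side converges (this is the content of `HasSum`). -/
theorem exp_tsum_eq_sum_compositions (b : ℕ → ℝ) (hb : ∀ k, 1 ≤ k → 0 ≤ b k)
    (x : ℝ) (hx : 0 ≤ x)
    (hconv : Summable fun k : ℕ => b (k + 1) * x ^ (k + 1)) :
    HasSum
      (fun p : ℕ => x ^ p *
        ∑ k : Composition p, ((k.length ! : ℝ))⁻¹ * ∏ l, b (k.blocksFun l))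
      (Real.exp (∑' k : ℕ, b (k + 1) * x ^ (k + 1))) := by
  set c : ℕ → ℝ := fun k => b (k + 1) * x ^ (k + 1) with hcdef
  have hc0 : ∀ k, 0 ≤ c k := fun k => mul_nonneg (hb _ k.succ_pos) (pow_nonneg hx _)
  set S : ℝ := ∑' k, c k with hSdef
  have hS0 : 0 ≤ S := tsum_nonneg hc0
  -- the real-valued summand over the sigma type of all compositions
  set g : (Σ p, Composition p) → ℝ :=
    fun q => x ^ q.1 * (((q.2.length)! : ℝ)⁻¹ * ∏ l, b (q.2.blocksFun l)) with hgdef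
  have hprod0 : ∀ (p : ℕ) (k : Composition p), 0 ≤ ∏ l, b (k.blocksFun l) := fun p k =>
    Finset.prod_nonneg fun l _ => hb _ (k.one_le_blocksFun l)
  have hg0 : ∀ q, 0 ≤ g q := fun q =>
    mul_nonneg (pow_nonneg hx _) (mul_nonneg (inv_nonneg.2 (Nat.cast_nonneg _)) (hprod0 _ _))
  set Cb : ℕ → ℝ≥0∞ := fun k => ENNReal.ofReal (c k) with hCbdef
  set H : (Σ n, Fin n → ℕ) → ℝ≥0∞ :=
    fun q => ((q.1)! : ℝ≥0∞)⁻¹ * ∏ i, Cb (q.2 i) with hHdef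
  -- Claim A : ofReal ∘ g = H ∘ compTupleEquiv
  have claimA : ∀ q, ENNReal.ofReal (g q) = H (compTupleEquiv q) := by
    rintro ⟨p, k⟩
    have h1 : ∀ l : Fin k.length, Cb (k.blocksFun l - 1)
        = ENNReal.ofReal (b (k.blocksFun l) * x ^ (k.blocksFun l)) := by
      intro l
      have : k.blocksFun l - 1 + 1 = k.blocksFun l := Nat.sub_add_cancel (k.one_le_blocksFun l)
      simp only [hCbdef, hcdef, this]
    have h2 : (∏ l : Fin k.length, b (k.blocksFun l) * x ^ (k.blocksFun l))
        = (∏ l, b (k.blocksFun l)) * x ^ p := by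
      rw [Finset.prod_mul_distrib, Finset.prod_pow_eq_pow_sum, k.sum_blocksFun]
    show ENNReal.ofReal (g ⟨p, k⟩)
        = ((k.length)! : ℝ≥0∞)⁻¹ * ∏ l, Cb (k.blocksFun l - 1)
    simp_rw [h1]
    rw [← ENNReal.ofReal_prod_of_nonneg
      (fun l _ => mul_nonneg (hb _ (k.one_le_blocksFun l)) (pow_nonneg hx _)), h2]
    rw [← ofReal_inv_factorial, ← ENNReal.ofReal_mul (by positivity)]
    congr 1
    simp only [hgdef]
    ring
  -- Claim B : the tsum of H is ofReal (exp S)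
  have hCbS : ∑' k, Cb k = ENNReal.ofReal S := by
    rw [hSdef, ENNReal.ofReal_tsum_of_nonneg hc0 hconv]
  have claimB : ∑' q, H q = ENNReal.ofReal (Real.exp S) := by
    rw [ENNReal.tsum_sigma' H]
    have h4 : ∀ n : ℕ, (∑' f : Fin n → ℕ, H ⟨n, f⟩) = ENNReal.ofReal (S ^ n / n !) := by
      intro n
      simp only [hHdef]
      rw [ENNReal.tsum_mul_left, tsum_pi_fin_pow, hCbS, ← ENNReal.ofReal_pow hS0,
        ← ofReal_inv_factorial, ← ENNReal.ofReal_mul (by positivity)]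
      congr 1
      rw [div_eq_mul_inv, mul_comm]
    simp_rw [h4]
    rw [← ENNReal.ofReal_tsum_of_nonneg (fun n => by positivity)
        (NormedSpace.expSeries_div_summable S)]
    congr 1
    rw [Real.exp_eq_exp_ℝ, NormedSpace.exp_eq_tsum_div]
  -- transfer back to ℝ
  have key : ∑' q, ENNReal.ofReal (g q) = ENNReal.ofReal (Real.exp S) := by
    simp_rw [claimA]
    exact compTupleEquiv.tsum_eq H ▸ claimB
  have hne : ∑' q, ENNReal.ofReal (g q) ≠ ⊤ := by
    rw [key]; exact ENNReal.ofReal_ne_top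
  have hsummable : Summable g := by
    have := ENNReal.summable_toReal hne
    simpa [ENNReal.toReal_ofReal, hg0, ENNReal.toReal_ofReal (hg0 _)] using this
  have htsum : ∑' q, g q = Real.exp S := by
    have := congrArg ENNReal.toReal key
    rw [ENNReal.tsum_toReal_eq (fun q => ENNReal.ofReal_ne_top)] at this
    simpa [ENNReal.toReal_ofReal (hg0 _), ENNReal.toReal_ofReal (Real.exp_pos S).le] using this
  have hgsum : HasSum g (Real.exp S) := hsummable.hasSum_iff.mpr htsum
  refine hgsum.sigma fun p => ?_
  rw [Finset.mul_sum]
  exact hasSum_fintype _
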